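/- Let (Ω, F, (F_t)_{t≥0}, P) be a filtered probability space and (Y_t)_{t≥0} a nonnegative, adapted process with right-continuous paths and each Y_t integrable. Suppose there exist constants T > 0, a ∈ (0,1] and γ ∈ ℝ such that for every u ≥ 0 and all 0 ≤ s < t ≤ T, E[ e^{γ(u+t)} Y_{u+t} | F_{u+s} ] ≥ a · e^{γ(u+s)} Y_{u+s} almost surely. Let λ ∈ ℝ satisfy γ ≥ −λ and limsup_{t→∞} (1/t)·log E[Y_t] < λ. Then P( lim_{t→∞} e^{−λt} Y_t = 0 ) = 1. -/

import Mathlib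

open MeasureTheory Filter

/-- One-step bound: if `B` is `ℱ t`-measurable and `α ≤ M` on `B`, then
`α * P(B) ≤ a⁻¹ * ∫_B Z` given `a • M ≤ E[Z | ℱ t]` a.e. -/
lemma aux_step {Ω : Type*} {m : MeasurableSpace Ω} {P : Measure Ω} [IsProbabilityMeasure P]
    (ℱ : Filtration ℝ m) (M : Ω → ℝ) (Z : Ω → ℝ)
    (hZint : Integrable Z P)
    {a : ℝ} (ha : 0 < a) {α : ℝ} {t : ℝ}
    (hMint : Integrable M P)
    (hcond : ∀ᵐ ω ∂P, a * M ω ≤ (P[Z | ℱ t]) ω)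
    {B : Set Ω} (hB : MeasurableSet[ℱ t] B) (hBsub : ∀ ω ∈ B, α ≤ M ω) :
    α * (P B).toReal ≤ a⁻¹ * ∫ ω in B, Z ω ∂P := by
  have hBm : MeasurableSet B := ℱ.le t B hB
  have h1 : α * (P B).toReal ≤ ∫ ω in B, M ω ∂P := by
    have : ∫ ω in B, (α : ℝ) ∂P ≤ ∫ ω in B, M ω ∂P := by
      refine setIntegral_mono_on (integrableOn_const ?_) hMint.integrableOn hBm hBsub
      exact (measure_lt_top P B).ne
    simpa [mul_comm, measureReal_def] using this
  have h2 : ∫ ω in B, M ω ∂P ≤ a⁻¹ * ∫ ω in B, Z ω ∂P := by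
    have hce : ∫ ω in B, (P[Z | ℱ t]) ω ∂P = ∫ ω in B, Z ω ∂P :=
      setIntegral_condExp (ℱ.le t) hZint hB
    have hmono : ∫ ω in B, M ω ∂P ≤ ∫ ω in B, a⁻¹ * (P[Z | ℱ t]) ω ∂P := by
      refine setIntegral_mono_ae hMint.integrableOn
        ((integrable_condExp.const_mul a⁻¹).integrableOn) ?_
      filter_upwards [hcond] with ω hω
      calc M ω = a⁻¹ * (a * M ω) := by field_simp
        _ ≤ a⁻¹ * (P[Z | ℱ t]) ω :=
          mul_le_mul_of_nonneg_left hω (inv_pos.2 ha).le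
    rw [integral_const_mul, hce] at hmono
    exact hmono
  linarith

/-- Finite maximal inequality for the approximate submartingale, strengthened form. -/
lemma aux_max_strong {Ω : Type*} {m : MeasurableSpace Ω} {P : Measure Ω} [IsProbabilityMeasure P]
    (ℱ : Filtration ℝ m) (M : ℝ → Ω → ℝ) (Z : Ω → ℝ)
    (hZint : Integrable Z P)
    {a : ℝ} (ha : 0 < a) {α : ℝ}
    (s : ℕ → ℝ) (hmono : Monotone s)
    (hmeas : ∀ i, StronglyMeasurable[ℱ (s i)] (M (s i)))
    (hintM : ∀ i, Integrable (M (s i)) P)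
    (hcond : ∀ i, ∀ᵐ ω ∂P, a * M (s i) ω ≤ (P[Z | ℱ (s i)]) ω) (k : ℕ) :
    MeasurableSet[ℱ (s k)] {ω | ∃ i ≤ k, α ≤ M (s i) ω} ∧
      α * (P {ω | ∃ i ≤ k, α ≤ M (s i) ω}).toReal ≤
        a⁻¹ * ∫ ω in {ω | ∃ i ≤ k, α ≤ M (s i) ω}, Z ω ∂P := by
  induction k with
  | zero =>
    have hE0 : {ω | ∃ i ≤ 0, α ≤ M (s i) ω} = {ω | α ≤ M (s 0) ω} := by
      ext ω; simp
    rw [hE0]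
    have hBmeas : MeasurableSet[ℱ (s 0)] {ω | α ≤ M (s 0) ω} :=
      measurableSet_le measurable_const (hmeas 0).measurable
    exact ⟨hBmeas, aux_step ℱ (M (s 0)) Z hZint ha (hintM 0) (hcond 0) hBmeas
      (fun ω hω => hω)⟩
  | succ k ih =>
    obtain ⟨ihm, ihb⟩ := ih
    set Ek : Set Ω := {ω | ∃ i ≤ k, α ≤ M (s i) ω} with hEk
    have hEk1m : MeasurableSet[ℱ (s (k+1))] Ek :=
      ℱ.mono (hmono (Nat.le_succ k)) _ ihm
    set C : Set Ω := {ω | α ≤ M (s (k+1)) ω} \ Ek with hC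
    have hCm : MeasurableSet[ℱ (s (k+1))] C :=
      (measurableSet_le measurable_const (hmeas (k+1)).measurable).diff hEk1m
    have hstep : α * (P C).toReal ≤ a⁻¹ * ∫ ω in C, Z ω ∂P :=
      aux_step ℱ (M (s (k+1))) Z hZint ha (hintM (k+1)) (hcond (k+1)) hCm
        (fun ω hω => hω.1)
    have hunion : {ω | ∃ i ≤ k + 1, α ≤ M (s i) ω} = Ek ∪ C := by
      ext ω
      simp only [Set.mem_setOf_eq, Set.mem_union, Set.mem_diff, hC, hEk]
      constructor
      · rintro ⟨i, hi, h⟩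
        rcases Nat.lt_succ_iff_lt_or_eq.mp (Nat.lt_succ_of_le hi) with h' | rfl
        · exact Or.inl ⟨i, Nat.lt_succ_iff.mp h', h⟩
        · by_cases hE : ∃ i ≤ k, α ≤ M (s i) ω
          · exact Or.inl hE
          · exact Or.inr ⟨h, hE⟩
      · rintro (⟨i, hi, h⟩ | ⟨h, _⟩)
        · exact ⟨i, hi.trans (Nat.le_succ k), h⟩
        · exact ⟨k+1, le_refl _, h⟩
    have hdisj : Disjoint Ek C := disjoint_sdiff_self_right
    have hCm' : MeasurableSet C := ℱ.le _ _ hCm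
    have hEkm' : MeasurableSet Ek := ℱ.le _ _ ihm
    have hPsum : P (Ek ∪ C) = P Ek + P C := measure_union hdisj hCm'
    have hIsum : ∫ ω in Ek ∪ C, Z ω ∂P = (∫ ω in Ek, Z ω ∂P) + ∫ ω in C, Z ω ∂P :=
      setIntegral_union hdisj hCm' hZint.integrableOn hZint.integrableOn
    constructor
    · rw [hunion]; exact hEk1m.union hCm
    · rw [hunion, hPsum, hIsum, ENNReal.toReal_add (measure_ne_top P _) (measure_ne_top P _)]
      ring_nf
      nlinarith [ihb, hstep]

/-- Finite maximal inequality. -/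
lemma aux_max {Ω : Type*} {m : MeasurableSpace Ω} {P : Measure Ω} [IsProbabilityMeasure P]
    (ℱ : Filtration ℝ m) (M : ℝ → Ω → ℝ) (Z : Ω → ℝ)
    (hZint : Integrable Z P) (hZnn : 0 ≤ᵐ[P] Z)
    {a : ℝ} (ha : 0 < a) {α : ℝ}
    (s : ℕ → ℝ) (hmono : Monotone s)
    (hmeas : ∀ i, StronglyMeasurable[ℱ (s i)] (M (s i)))
    (hintM : ∀ i, Integrable (M (s i)) P)
    (hcond : ∀ i, ∀ᵐ ω ∂P, a * M (s i) ω ≤ (P[Z | ℱ (s i)]) ω) (k : ℕ) :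
    α * (P {ω | ∃ i ≤ k, α ≤ M (s i) ω}).toReal ≤ a⁻¹ * ∫ ω, Z ω ∂P := by
  refine le_trans (aux_max_strong ℱ M Z hZint ha s hmono hmeas hintM hcond k).2 ?_
  exact mul_le_mul_of_nonneg_left (setIntegral_le_integral hZint hZnn) (inv_pos.2 ha).le

/-- Dyadic points are dense from the right in a window. -/
lemma aux_dyadic {T : ℝ} (hT : 0 < T) {u t δ : ℝ} (h1 : u ≤ t) (h2 : t < u + T) (hδ : 0 < δ) :
    ∃ m j : ℕ, j < 2^m ∧ t ≤ u + (j:ℝ)*(T/2^m) ∧ u + (j:ℝ)*(T/2^m) < t + δ ∧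
      u + (j:ℝ)*(T/2^m) < u + T := by
  set ε := min δ (u + T - t) with hε
  have hε0 : 0 < ε := lt_min hδ (by linarith)
  obtain ⟨m, hm⟩ := exists_pow_lt_of_lt_one (div_pos hε0 hT) (by norm_num : (1:ℝ)/2 < 1)
  have h2m : (0:ℝ) < 2^m := by positivity
  have hm' : ((2:ℝ)^m)⁻¹ < ε / T := by
    rwa [show ((1:ℝ)/2)^m = ((2:ℝ)^m)⁻¹ by rw [one_div, inv_pow]] at hm
  have hTm : T / 2^m < ε := by
    rw [div_eq_mul_inv]
    calc T * ((2:ℝ)^m)⁻¹ < T * (ε/T) := mul_lt_mul_of_pos_left hm' hT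
      _ = ε := by field_simp
  set j := ⌈(t - u) * 2^m / T⌉₊ with hj
  have harg0 : 0 ≤ (t - u) * 2^m / T := div_nonneg (mul_nonneg (by linarith) h2m.le) hT.le
  have hjle : (t - u) * 2^m / T ≤ (j:ℝ) := Nat.le_ceil _
  have hjlt : (j:ℝ) < (t - u) * 2^m / T + 1 := Nat.ceil_lt_add_one harg0
  have hdivpos : 0 < T / 2^m := div_pos hT h2m
  have hq1 : t ≤ u + (j:ℝ)*(T/2^m) := by
    have h := mul_le_mul_of_nonneg_right hjle hdivpos.le
    have heq : (t - u) * 2^m / T * (T/2^m) = t - u := by field_simp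
    rw [heq] at h; linarith
  have hq2 : (j:ℝ)*(T/2^m) < (t - u) + T/2^m := by
    have h := mul_lt_mul_of_pos_right hjlt hdivpos
    have heq : ((t - u) * 2^m / T + 1) * (T/2^m) = (t - u) + T/2^m := by field_simp
    rwa [heq] at h
  have hεδ : ε ≤ δ := min_le_left _ _
  have hεw : ε ≤ u + T - t := min_le_right _ _
  refine ⟨m, j, ?_, hq1, by linarith, by linarith⟩
  have hlt : (j:ℝ) * (T/2^m) < T := by linarith
  have hTT : (2:ℝ)^m * (T/2^m) = T := by field_simp
  have hjR : (j:ℝ) < 2^m := by nlinarith [hlt, hTT, hdivpos]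
  exact_mod_cast hjR

set_option maxHeartbeats 1000000 in
/-- If a nonnegative, adapted, right-continuous, integrable process satisfies the
approximate-submartingale property `E[e^{γ(u+t)} Y_{u+t} | F_{u+s}] ≥ a e^{γ(u+s)} Y_{u+s}`
on windows of length `T`, and `λ` satisfies `γ ≥ -λ` and
`limsup_{t→∞} (1/t) log E[Y_t] < λ`, then `e^{-λ t} Y_t → 0` a.s. -/
theorem stmt_3 {Ω : Type*} {m : MeasurableSpace Ω} {P : Measure Ω} [IsProbabilityMeasure P]
    (ℱ : Filtration ℝ m) (Y : ℝ → Ω → ℝ)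
    (hadapted : Adapted ℱ Y)
    (hrc : ∀ ω, ∀ t : ℝ, ContinuousWithinAt (fun s => Y s ω) (Set.Ici t) t)
    (hnonneg : ∀ t ω, 0 ≤ Y t ω)
    (hint : ∀ t, Integrable (Y t) P)
    (T a γ : ℝ) (hT : 0 < T) (ha0 : 0 < a) (ha1 : a ≤ 1)
    (hineq : ∀ u : ℝ, 0 ≤ u → ∀ s t : ℝ, 0 ≤ s → s < t → t ≤ T →
      ∀ᵐ ω ∂P, a * (Real.exp (γ * (u + s)) * Y (u + s) ω) ≤
        (P[fun ω' => Real.exp (γ * (u + t)) * Y (u + t) ω' | ℱ (u + s)]) ω)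
    (lam : ℝ) (hγ : -lam ≤ γ)
    (hgrowth : Filter.limsup
        (fun t => ((Real.log (∫ ω, Y t ω ∂P) / t : ℝ) : EReal)) Filter.atTop
      < (lam : EReal)) :
    ∀ᵐ ω ∂P, Filter.Tendsto (fun t => Real.exp (-lam * t) * Y t ω) Filter.atTop (nhds 0) := by
  classical
  -- The weighted process
  set M : ℝ → Ω → ℝ := fun t ω => Real.exp (γ * t) * Y t ω with hMdef
  have hMmeas : ∀ t : ℝ, StronglyMeasurable[ℱ t] (M t) := fun t => ((hadapted t).const_mul _).stronglyMeasurable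
  have hMint : ∀ t : ℝ, Integrable (M t) P := fun t => (hint t).const_mul _
  have hMnn : ∀ (t : ℝ) ω, 0 ≤ M t ω := fun t ω => mul_nonneg (Real.exp_pos _).le (hnonneg t ω)
  have hMrc : ∀ ω (t : ℝ), ContinuousWithinAt (fun s => M s ω) (Set.Ici t) t := fun ω t =>
    ((Real.continuous_exp.comp (continuous_const.mul continuous_id)).continuousWithinAt).mul
      (hrc ω t)
  -- extract a growth rate `lam' < lam`
  obtain ⟨c, hc1, hc2⟩ := exists_between hgrowth
  have hcbot : c ≠ ⊥ := (bot_le.trans_lt hc1).ne'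
  have hctop : c ≠ ⊤ := (hc2.trans_le le_top).ne
  set lam' := c.toReal with hlam'def
  have hcoe : (lam' : EReal) = c := EReal.coe_toReal hctop hcbot
  have hlam'lt : lam' < lam := by
    rw [← EReal.coe_lt_coe_iff, hcoe]; exact hc2
  have hev : ∀ᶠ t in (atTop : Filter ℝ), Real.log (∫ ω, Y t ω ∂P) / t < lam' := by
    have h := eventually_lt_of_limsup_lt (hcoe ▸ hc1)
    filter_upwards [h] with t ht
    exact_mod_cast ht
  obtain ⟨t0, ht0⟩ := eventually_atTop.mp (hev.and (eventually_ge_atTop 1))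
  have hE : ∀ t : ℝ, t0 ≤ t → ∫ ω, Y t ω ∂P ≤ Real.exp (lam' * t) := by
    intro t ht
    obtain ⟨h1, h2⟩ := ht0 t ht
    have htpos : (0:ℝ) < t := lt_of_lt_of_le one_pos h2
    rcases le_or_gt (∫ ω, Y t ω ∂P) 0 with h | h
    · exact h.trans (Real.exp_pos _).le
    · have hlog : Real.log (∫ ω, Y t ω ∂P) < lam' * t := by
        rw [div_lt_iff₀ htpos] at h1; linarith
      calc ∫ ω, Y t ω ∂P = Real.exp (Real.log (∫ ω, Y t ω ∂P)) := (Real.exp_log h).symm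
        _ ≤ Real.exp (lam' * t) := Real.exp_le_exp.2 hlog.le
  -- constants
  set b : ℝ := lam + γ with hbdef
  set b' : ℝ := lam' + γ with hb'def
  set b'' : ℝ := (b + b')/2 with hb''def
  have hb0 : 0 ≤ b := by rw [hbdef]; linarith
  have hb'b'' : b' < b'' := by rw [hb''def, hbdef, hb'def]; linarith
  have hb''b : b'' < b := by rw [hb''def, hbdef, hb'def]; linarith
  set ρ : ℝ := Real.exp ((b' - b'') * T) with hρdef
  have hρ0 : 0 < ρ := Real.exp_pos _
  have hρ1 : ρ < 1 := Real.exp_lt_one_iff.2 (by nlinarith)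
  set alph : ℕ → ℝ := fun n => Real.exp (b'' * (n*T)) with halphdef
  have halph0 : ∀ n, 0 < alph n := fun n => Real.exp_pos _
  set K : ℝ := a⁻¹ * Real.exp (b' * T) with hKdef
  have hK0 : 0 ≤ K := mul_nonneg (inv_pos.2 ha0).le (Real.exp_pos _).le
  -- dyadic grids and events
  set sfun : ℕ → ℕ → ℕ → ℝ :=
    fun n m i => n*T + ((min i (2^m - 1) : ℕ) : ℝ) * (T/2^m) with hsfundef
  set Z : ℕ → Ω → ℝ := fun n ω => Real.exp (γ * (n*T + T)) * Y (n*T + T) ω with hZdef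
  set E : ℕ → ℕ → Set Ω :=
    fun n m => {ω | ∃ i ≤ 2^m - 1, alph n ≤ M (sfun n m i) ω} with hEdef
  set A : ℕ → Set Ω := fun n => ⋃ m, E n m with hAdef
  -- the conditional inequality on the dyadic grid
  have hcond : ∀ n m i : ℕ, ∀ᵐ ω ∂P, a * M (sfun n m i) ω ≤ (P[Z n | ℱ (sfun n m i)]) ω := by
    intro n m i
    have h2mpos : (0:ℝ) < 2^m := by positivity
    have h1 : (1:ℕ) ≤ 2^m := Nat.one_le_two_pow
    have hcast : ((min i (2^m - 1) : ℕ) : ℝ) < 2^m := by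
      have hlt : (min i (2^m-1) : ℕ) < 2^m := by omega
      exact_mod_cast hlt
    have h2m1 : ((min i (2^m - 1) : ℕ) : ℝ) * (T/2^m) < T := by
      have hTT : (2:ℝ)^m * (T/2^m) = T := by field_simp
      nlinarith [div_pos hT h2mpos]
    have hs0 : 0 ≤ ((min i (2^m - 1) : ℕ) : ℝ) * (T/2^m) := by positivity
    have h := hineq (n*T) (by positivity) (((min i (2^m - 1) : ℕ) : ℝ) * (T/2^m)) T hs0 h2m1
      le_rfl
    simp only [hMdef, hsfundef, hZdef]
    exact h
  -- bound on the measure of each finite-level event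
  have hPE : ∀ n m : ℕ, t0 ≤ (n:ℝ)*T + T → P (E n m) ≤ ENNReal.ofReal (K * ρ^n) := by
    intro n m hn
    have hsmono : Monotone (sfun n m) := by
      intro i j hij
      simp only [hsfundef]
      have : (min i (2^m-1) : ℕ) ≤ min j (2^m-1) := by omega
      have hc : ((min i (2^m-1) : ℕ) : ℝ) ≤ ((min j (2^m-1) : ℕ) : ℝ) := by exact_mod_cast this
      have hd : (0:ℝ) ≤ T/2^m := by positivity
      nlinarith
    have hZint : Integrable (Z n) P := (hint _).const_mul _
    have hZnn : 0 ≤ᵐ[P] Z n :=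
      Filter.Eventually.of_forall fun ω => mul_nonneg (Real.exp_pos _).le (hnonneg _ _)
    have hmax := aux_max ℱ M (Z n) hZint hZnn ha0 (α := alph n) (sfun n m) hsmono
      (fun i => hMmeas _) (fun i => hMint _) (fun i => hcond n m i) (2^m - 1)
    -- ∫ Z n ≤ exp (b' * (n*T + T))
    have hZbound : ∫ ω, Z n ω ∂P ≤ Real.exp (b' * ((n:ℝ)*T + T)) := by
      simp only [hZdef]
      rw [integral_const_mul]
      calc Real.exp (γ * ((n:ℝ)*T + T)) * ∫ ω, Y ((n:ℝ)*T + T) ω ∂P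
          ≤ Real.exp (γ * ((n:ℝ)*T + T)) * Real.exp (lam' * ((n:ℝ)*T + T)) :=
            mul_le_mul_of_nonneg_left (hE _ hn) (Real.exp_pos _).le
        _ = Real.exp (b' * ((n:ℝ)*T + T)) := by
            rw [← Real.exp_add]; congr 1; rw [hb'def]; ring
    have htr : (P (E n m)).toReal ≤ K * ρ^n := by
      have h1 : alph n * (P (E n m)).toReal ≤ a⁻¹ * Real.exp (b' * ((n:ℝ)*T + T)) := by
        refine le_trans ?_ (mul_le_mul_of_nonneg_left hZbound (inv_pos.2 ha0).le)
        exact hmax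
      have hKρ : (alph n)⁻¹ * (a⁻¹ * Real.exp (b' * ((n:ℝ)*T + T))) = K * ρ^n := by
        have h1 : ρ^n = Real.exp ((n:ℕ)*((b'-b'')*T)) := by rw [hρdef, ← Real.exp_nat_mul]
        have h2 : (alph n)⁻¹ = Real.exp (-(b''*((n:ℝ)*T))) := by
          simp only [halphdef]; exact (Real.exp_neg _).symm
        rw [h1, h2, hKdef, mul_left_comm, ← Real.exp_add, mul_assoc, ← Real.exp_add]
        congr 1
        push_cast
        ring
      have h2 : (P (E n m)).toReal ≤ (alph n)⁻¹ * (a⁻¹ * Real.exp (b' * ((n:ℝ)*T + T))) := by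
        rw [← div_eq_inv_mul, le_div_iff₀' (halph0 n)]
        exact h1
      rwa [hKρ] at h2
    exact (ENNReal.le_ofReal_iff_toReal_le (measure_ne_top P _)
      (mul_nonneg hK0 (pow_nonneg hρ0.le n))).2 htr
  -- monotonicity of the events in the grid level
  have hEmono : ∀ n, Monotone (E n) := by
    intro n
    apply monotone_nat_of_le_succ
    intro m ω hω
    obtain ⟨i, hi, h⟩ := hω
    have h1 : (1:ℕ) ≤ 2^m := Nat.one_le_two_pow
    have h2 : (2:ℕ)^(m+1) = 2 * 2^m := by ring
    refine ⟨2*i, by omega, ?_⟩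
    have heq : sfun n (m+1) (2*i) = sfun n m i := by
      simp only [hsfundef]
      have hmin1 : min (2*i) (2^(m+1) - 1) = 2*i := by omega
      have hmin2 : min i (2^m - 1) = i := min_eq_left hi
      rw [hmin1, hmin2]
      have h2R : (2:ℝ)^(m+1) = 2 * 2^m := by ring
      rw [h2R]
      push_cast
      have h2mpos : (0:ℝ) < 2^m := by positivity
      field_simp
    rwa [heq]
  -- bound on P (A n)
  have hPA : ∀ n : ℕ, t0 ≤ (n:ℝ)*T + T → P (A n) ≤ ENNReal.ofReal (K * ρ^n) := by
    intro n hn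
    rw [hAdef]
    rw [(hEmono n).directed_le.measure_iUnion]
    exact iSup_le fun m => hPE n m hn
  -- summability of the bounds
  set N0 : ℕ := ⌈t0 / T⌉₊ with hN0def
  set K' : ℝ := K + (ρ^N0)⁻¹ with hK'def
  have hbound_all : ∀ n, P (A n) ≤ ENNReal.ofReal (K' * ρ^n) := by
    intro n
    rcases le_or_gt N0 n with hn | hn
    · have hge : t0 ≤ (n:ℝ)*T + T := by
        have h1 : t0 / T ≤ (N0:ℝ) := Nat.le_ceil _
        have h2 : (N0:ℝ) ≤ n := by exact_mod_cast hn
        rw [div_le_iff₀ hT] at h1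
        nlinarith
      refine le_trans (hPA n hge) (ENNReal.ofReal_le_ofReal ?_)
      have hx : 0 ≤ (ρ^N0)⁻¹ * ρ^n := by positivity
      have hexp : K' * ρ^n = K * ρ^n + (ρ^N0)⁻¹ * ρ^n := by rw [hK'def]; ring
      rw [hexp]
      exact le_add_of_nonneg_right hx
    · have h1 : (1:ℝ) ≤ K' * ρ^n := by
        have hρle : ρ^N0 ≤ ρ^n := pow_le_pow_of_le_one hρ0.le hρ1.le hn.le
        have hpos : (0:ℝ) < ρ^N0 := by positivity
        have hy : (1:ℝ) ≤ (ρ^N0)⁻¹ * ρ^n := by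
          rw [← div_eq_inv_mul, le_div_iff₀ hpos]; linarith
        have hK : 0 ≤ K * ρ^n := mul_nonneg hK0 (pow_nonneg hρ0.le n)
        have hexp : K' * ρ^n = K * ρ^n + (ρ^N0)⁻¹ * ρ^n := by rw [hK'def]; ring
        rw [hexp]
        exact le_add_of_nonneg_of_le hK hy
      calc P (A n) ≤ 1 := prob_le_one
        _ = ENNReal.ofReal 1 := ENNReal.ofReal_one.symm
        _ ≤ ENNReal.ofReal (K' * ρ^n) := ENNReal.ofReal_le_ofReal h1
  have htsum : ∑' n, P (A n) ≠ ⊤ := by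
    have hsummable : Summable (fun n : ℕ => K' * ρ^n) :=
      (summable_geometric_of_lt_one hρ0.le hρ1).mul_left K'
    have hnn : ∀ n : ℕ, 0 ≤ K' * ρ^n := by
      intro n
      have : (0:ℝ) ≤ (ρ^N0)⁻¹ := by positivity
      have : 0 ≤ K' := by rw [hK'def]; positivity
      positivity
    refine ne_top_of_le_ne_top (@ENNReal.ofReal_ne_top (∑' n : ℕ, K' * ρ^n)) ?_
    calc ∑' n, P (A n) ≤ ∑' n, ENNReal.ofReal (K' * ρ^n) := ENNReal.tsum_le_tsum hbound_all
      _ = ENNReal.ofReal (∑' n : ℕ, K' * ρ^n) :=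
          (ENNReal.ofReal_tsum_of_nonneg hnn hsummable).symm
  -- Borel–Cantelli
  have hae : ∀ᵐ ω ∂P, ∀ᶠ n in (atTop : Filter ℕ), ω ∉ A n := by
    have hbc := measure_limsup_atTop_eq_zero htsum
    rw [ae_iff]
    have hset : {ω | ¬ ∀ᶠ n in (atTop : Filter ℕ), ω ∉ A n} = limsup A atTop := by
      ext ω
      simp only [Set.mem_setOf_eq, not_eventually, not_not, mem_limsup_iff_frequently_mem]
    rw [hset]; exact hbc
  -- conclusion, ω by ω
  filter_upwards [hae] with ω hω
  obtain ⟨N, hN⟩ := eventually_atTop.mp hω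
  -- from non-membership in `A n` to a bound on the whole window
  have key : ∀ n, N ≤ n → ∀ t : ℝ, (n:ℝ)*T ≤ t → t < (n:ℝ)*T + T → M t ω ≤ alph n := by
    intro n hn t ht1 ht2
    by_contra hcon
    push_neg at hcon
    have hev2 : ∀ᶠ s in nhdsWithin t (Set.Ici t), alph n < M s ω :=
      (hMrc ω t).eventually (lt_mem_nhds hcon)
    rw [eventually_nhdsWithin_iff, Metric.eventually_nhds_iff] at hev2
    obtain ⟨δ, hδ0, hδ⟩ := hev2
    obtain ⟨mm, j, hjlt, hq1, hq2, hq3⟩ := aux_dyadic hT ht1 ht2 hδ0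
    have hq : alph n < M ((n:ℝ)*T + (j:ℝ)*(T/2^mm)) ω := by
      refine hδ ?_ ?_
      · rw [Real.dist_eq, abs_of_nonneg (by linarith)]; linarith
      · exact hq1
    apply hN n hn
    simp only [hAdef, Set.mem_iUnion, hEdef, Set.mem_setOf_eq]
    have h1 : (1:ℕ) ≤ 2^mm := Nat.one_le_two_pow
    refine ⟨mm, j, by omega, ?_⟩
    have hsf : sfun n mm j = (n:ℝ)*T + (j:ℝ)*(T/2^mm) := by
      simp only [hsfundef]
      rw [min_eq_left (by omega)]
    rw [hsf]
    exact hq.le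
  -- eventual bound by a function tending to zero
  have hbnd : ∀ᶠ t in (atTop : Filter ℝ), Real.exp (-lam*t) * Y t ω ≤
      Real.exp ((b''-b) * ((⌊t/T⌋₊ : ℝ) * T)) := by
    filter_upwards [eventually_ge_atTop ((N:ℝ)*T), eventually_ge_atTop (0:ℝ)] with t htN ht0'
    set n := ⌊t/T⌋₊ with hndef
    have hdiv0 : 0 ≤ t/T := div_nonneg ht0' hT.le
    have hnt : (n:ℝ)*T ≤ t := by
      have h := Nat.floor_le hdiv0
      rw [le_div_iff₀ hT] at h
      exact h
    have hnt2 : t < (n:ℝ)*T + T := by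
      have h := Nat.lt_floor_add_one (t/T)
      rw [div_lt_iff₀ hT] at h
      push_cast at h
      linarith
    have hnN : N ≤ n := Nat.le_floor ((le_div_iff₀ hT).mpr htN)
    have hMb := key n hnN t hnt hnt2
    have heq : Real.exp (-lam*t) * Y t ω = Real.exp (-b*t) * M t ω := by
      simp only [hMdef]
      rw [← mul_assoc, ← Real.exp_add]
      congr 2
      rw [hbdef]; ring
    rw [heq]
    calc Real.exp (-b*t) * M t ω ≤ Real.exp (-b*((n:ℝ)*T)) * alph n := by
          apply mul_le_mul ?_ hMb (hMnn t ω) (Real.exp_pos _).le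
          exact Real.exp_le_exp.2 (by nlinarith)
      _ = Real.exp ((b''-b) * ((n:ℝ)*T)) := by
          simp only [halphdef]
          rw [← Real.exp_add]
          congr 1; ring
  have hg : Tendsto (fun t : ℝ => Real.exp ((b''-b) * ((⌊t/T⌋₊ : ℝ) * T))) atTop (nhds 0) := by
    apply Real.tendsto_exp_atBot.comp
    have h1 : Tendsto (fun t : ℝ => (⌊t/T⌋₊ : ℝ) * T) atTop atTop := by
      apply Tendsto.atTop_mul_const hT
      exact tendsto_natCast_atTop_atTop.comp
        (tendsto_nat_floor_atTop.comp (tendsto_id.atTop_div_const hT))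
    exact (tendsto_const_mul_atBot_of_neg (by linarith)).2 h1
  exact squeeze_zero'
    (Filter.Eventually.of_forall fun t => mul_nonneg (Real.exp_pos _).le (hnonneg t ω))
    hbnd hg
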